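/- (Generalized Young inequality) For every p ∈ (1,∞) and every δ > 0 there exists a constant c_δ ≥ 1, depending only on p and δ (and the dimensions n, N), such that for every κ ≥ 0 and all matrices ξ₁, ξ₂, ξ₃ ∈ ℝ^{n×N} one has (S(ξ₁) − S(ξ₂)) : (ξ₂ − ξ₃) ≤ δ·|V(ξ₁) − V(ξ₂)|² + c_δ·|V(ξ₂) − V(ξ₃)|². -/

import Mathlib

open scoped RealInnerProductSpace

/-- The nonlinear operator `S(ξ) = (κ + |ξ|)^(p-2) ξ` on `n × N` real matrices,
equipped with the Frobenius (Euclidean) norm; for `κ = 0` and `ξ = 0` the value is `0`. -/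
noncomputable def Sop (n N : ℕ) (p κ : ℝ) (ξ : EuclideanSpace ℝ (Fin n × Fin N)) :
    EuclideanSpace ℝ (Fin n × Fin N) :=
  ((κ + ‖ξ‖) ^ (p - 2)) • ξ

/-- The nonlinear operator `V(ξ) = (κ + |ξ|)^((p-2)/2) ξ`. -/
noncomputable def Vop (n N : ℕ) (p κ : ℝ) (ξ : EuclideanSpace ℝ (Fin n × Fin N)) :
    EuclideanSpace ℝ (Fin n × Fin N) :=
  ((κ + ‖ξ‖) ^ ((p - 2) / 2)) • ξ


open Real

/-- Tangent line inequality for the concave function `t ↦ t^s`, `0 ≤ s ≤ 1`. -/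
lemma key_concave {s x y : ℝ} (hs0 : 0 ≤ s) (hs1 : s ≤ 1) (hx : 0 < x) (hy : 0 ≤ y) :
    y ^ s ≤ s * x ^ (s - 1) * y + (1 - s) * x ^ s := by
  have hgm := Real.geom_mean_le_arith_mean2_weighted hs0 (by linarith : (0:ℝ) ≤ 1 - s)
      hy hx.le (by ring)
  have hxs : (0:ℝ) < x ^ (s - 1) := Real.rpow_pos_of_pos hx _
  have h2 := mul_le_mul_of_nonneg_left hgm hxs.le
  have e1 : x ^ (s - 1) * (y ^ s * x ^ (1 - s)) = y ^ s := by
    rw [mul_comm (y ^ s) _, ← mul_assoc, ← Real.rpow_add hx]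
    norm_num
  have e2 : x ^ (s - 1) * x = x ^ s := by
    nth_rewrite 2 [← Real.rpow_one x]
    rw [← Real.rpow_add hx]
    norm_num
  calc y ^ s = x ^ (s - 1) * (y ^ s * x ^ (1 - s)) := e1.symm
    _ ≤ x ^ (s - 1) * (s * y + (1 - s) * x) := h2
    _ = s * x ^ (s - 1) * y + (1 - s) * (x ^ (s - 1) * x) := by ring
    _ = s * x ^ (s - 1) * y + (1 - s) * x ^ s := by rw [e2]

/-- Tangent line inequality for the convex function `t ↦ t^q`, `1 ≤ q`. -/
lemma key_convex {q x y : ℝ} (hq : 1 ≤ q) (hx : 0 < x) (hy : 0 ≤ y) :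
    q * (x ^ (q - 1) * y) ≤ y ^ q + (q - 1) * x ^ q := by
  have hq0 : (0:ℝ) < q := by linarith
  have hw2 : (0:ℝ) ≤ 1 - 1/q := by
    rw [sub_nonneg, div_le_one hq0]; linarith
  have hgm := Real.geom_mean_le_arith_mean2_weighted (by positivity : (0:ℝ) ≤ 1/q) hw2
      (Real.rpow_nonneg hy q) (Real.rpow_nonneg hx.le q) (by field_simp; ring)
  have e1 : (y ^ q) ^ (1/q : ℝ) = y := by
    rw [← Real.rpow_mul hy]
    field_simp
    simp
  have e2 : (x ^ q) ^ (1 - 1/q : ℝ) = x ^ (q - 1) := by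
    rw [← Real.rpow_mul hx.le]
    congr 1
    field_simp
  rw [e1, e2] at hgm
  have h3 := mul_le_mul_of_nonneg_left hgm hq0.le
  have e3 : q * (1/q * y ^ q + (1 - 1/q) * x ^ q) = y ^ q + (q - 1) * x ^ q := by
    field_simp
  calc q * (x ^ (q - 1) * y) = q * (y * x ^ (q - 1)) := by ring
    _ ≤ q * (1/q * y ^ q + (1 - 1/q) * x ^ q) := h3
    _ = y ^ q + (q - 1) * x ^ q := e3

/-- For `q ≥ 0` and `0 ≤ y ≤ x`: `(x^q - y^q) * y ≤ q * x^q * (x - y)`. -/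
lemma pow_diff_mul_le_of_nonneg {q x y : ℝ} (hq : 0 ≤ q) (hy : 0 ≤ y) (hxy : y ≤ x) :
    (x ^ q - y ^ q) * y ≤ q * x ^ q * (x - y) := by
  rcases hy.eq_or_lt with h0 | hy0
  · rw [← h0, mul_zero]
    have hx : (0:ℝ) ≤ x := by linarith
    have h1 := Real.rpow_nonneg hx q
    have := mul_nonneg (mul_nonneg hq h1) (by linarith : (0:ℝ) ≤ x - 0)
    linarith
  have hx0 : (0:ℝ) < x := lt_of_lt_of_le hy0 hxy
  have hBA : y ^ q ≤ x ^ q := Real.rpow_le_rpow hy0.le hxy hq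
  rcases le_total q 1 with hq1 | hq1
  · -- concave regime: tangent at y, evaluated at x
    have hk := key_concave hq hq1 hy0 hx0.le
    -- x^q ≤ q*y^(q-1)*x + (1-q)*y^q
    have ey : y ^ (q - 1) * y = y ^ q := by
      rw [← Real.rpow_add_one hy0.ne' (q - 1)]
      norm_num
    have h1 := mul_le_mul_of_nonneg_right hk hy0.le
    -- (x^q)*y ≤ (q*y^(q-1)*x + (1-q)*y^q)*y
    have h2 : (q * y ^ (q - 1) * x + (1 - q) * y ^ q) * y
        = q * x * (y ^ (q - 1) * y) + (1 - q) * (y ^ q * y) := by ring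
    rw [ey] at h2
    rw [h2] at h1
    nlinarith [mul_le_mul_of_nonneg_left hBA (mul_nonneg hq (sub_nonneg.2 hxy))]
  · -- convex regime: tangent at x, evaluated at y
    have hk := key_convex hq1 hx0 hy0.le
    -- q*(x^(q-1)*y) ≤ y^q + (q-1)*x^q
    have ex : x ^ (q - 1) * x = x ^ q := by
      rw [← Real.rpow_add_one hx0.ne' (q - 1)]
      norm_num
    -- x^q - y^q ≤ q*x^(q-1)*(x-y)
    have hd : x ^ q - y ^ q ≤ q * x ^ (q - 1) * (x - y) := by nlinarith [hk, ex]
    have h1 := mul_le_mul_of_nonneg_right hd hy0.le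
    have hC : (0:ℝ) ≤ x ^ (q - 1) := Real.rpow_nonneg hx0.le _
    nlinarith [mul_le_mul_of_nonneg_left hxy (mul_nonneg (mul_nonneg hq hC) (sub_nonneg.2 hxy)), ex]

/-- For `-1 ≤ q ≤ 0` and `0 ≤ y ≤ x`, `0 < x`: `(y^q - x^q) * y ≤ (-q) * x^q * (x - y)`. -/
lemma pow_diff_mul_le_of_nonpos {q x y : ℝ} (hq1 : -1 ≤ q) (hq0 : q ≤ 0) (hy : 0 ≤ y)
    (hxy : y ≤ x) (hx0 : 0 < x) :
    (y ^ q - x ^ q) * y ≤ (-q) * x ^ q * (x - y) := by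
  rcases hy.eq_or_lt with h0 | hy0
  · rw [← h0, mul_zero]
    have h1 : (0:ℝ) ≤ x ^ q := Real.rpow_nonneg hx0.le q
    have := mul_nonneg (mul_nonneg (by linarith : (0:ℝ) ≤ -q) h1) (by linarith : (0:ℝ) ≤ x - 0)
    linarith
  have hk := key_concave (s := q + 1) (by linarith) (by linarith) hx0 hy0.le
  -- y^(q+1) ≤ (q+1)*x^(q+1-1)*y + (1-(q+1))*x^(q+1)
  rw [(by ring : q + 1 - 1 = q)] at hk
  have ey : y ^ (q + 1) = y ^ q * y := by
    rw [Real.rpow_add_one hy0.ne' q]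
  have ex : x ^ (q + 1) = x ^ q * x := by
    rw [Real.rpow_add_one hx0.ne' q]
  rw [ey, ex] at hk
  nlinarith [hk]

/-- Comparison between `x^r` and `g^r` when `g/2 ≤ x ≤ g`, with `r = (p-2)/2`. -/
lemma base_half {p g x : ℝ} (hg : 0 < g) (h2 : g ≤ 2 * x) (hxg : x ≤ g) :
    (2:ℝ) ^ (-|p - 2| / 2) * g ^ ((p - 2) / 2) ≤ x ^ ((p - 2) / 2) := by
  have hx0 : (0:ℝ) < x := by linarith
  rcases le_total 2 p with h | h
  · rw [abs_of_nonneg (by linarith : (0:ℝ) ≤ p - 2)]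
    have hle : g / 2 ≤ x := by linarith
    have h1 : (g / 2) ^ ((p - 2) / 2) ≤ x ^ ((p - 2) / 2) :=
      Real.rpow_le_rpow (by positivity) hle (by linarith)
    have e : (g / 2) ^ ((p - 2) / 2) = (2:ℝ) ^ (-(p - 2) / 2) * g ^ ((p - 2) / 2) := by
      rw [Real.div_rpow hg.le (by norm_num : (0:ℝ) ≤ 2),
        (by ring : -(p - 2) / 2 = -((p - 2) / 2)), Real.rpow_neg (by norm_num : (0:ℝ) ≤ 2)]
      ring
    rw [← e]
    exact h1
  · rw [abs_of_nonpos (by linarith : p - 2 ≤ 0)]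
    have h1 : g ^ ((p - 2) / 2) ≤ x ^ ((p - 2) / 2) :=
      Real.rpow_le_rpow_of_nonpos hx0 hxg (by linarith)
    have h2' : (2:ℝ) ^ (- -(p - 2) / 2) ≤ 1 :=
      Real.rpow_le_one_of_one_le_of_nonpos (by norm_num) (by linarith)
    have h3 : (0:ℝ) ≤ g ^ ((p - 2) / 2) := Real.rpow_nonneg hg.le _
    nlinarith [Real.rpow_nonneg (by norm_num : (0:ℝ) ≤ 2) (- -(p - 2) / 2)]

noncomputable def GYc0 (p : ℝ) : ℝ := min (p / 2) 1 * (2:ℝ) ^ (-|p - 2| / 2) / 2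

noncomputable def GYC2 (p : ℝ) : ℝ := (2:ℝ) ^ |p - 2| * (1 + |p - 2|)

lemma GYc0_pos {p : ℝ} (hp : 1 < p) : 0 < GYc0 p := by
  have h1 : (0:ℝ) < (2:ℝ) ^ (-|p - 2| / 2) := Real.rpow_pos_of_pos (by norm_num) _
  have h2 : (0:ℝ) < min (p / 2) 1 := lt_min (by linarith) one_pos
  unfold GYc0; positivity

lemma GYC2_ge_one (p : ℝ) : 1 ≤ GYC2 p := by
  have h1 : (1:ℝ) ≤ (2:ℝ) ^ |p - 2| := by
    have := Real.rpow_le_rpow_of_exponent_le (by norm_num : (1:ℝ) ≤ 2) (abs_nonneg (p - 2))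
    rwa [Real.rpow_zero] at this
  unfold GYC2
  nlinarith [abs_nonneg (p - 2)]

lemma Sop_lip_aux (n N : ℕ) {p κ : ℝ} (hp : 1 < p) (hκ : 0 ≤ κ)
    (ξ η : EuclideanSpace ℝ (Fin n × Fin N)) (hba : ‖η‖ ≤ ‖ξ‖) :
    ‖Sop n N p κ ξ - Sop n N p κ η‖ ≤ GYC2 p * (κ + ‖ξ‖ + ‖η‖) ^ (p - 2) * ‖ξ - η‖ := by
  by_cases hξ : ξ = 0
  · have hη : η = 0 := by
      rw [hξ, norm_zero] at hba
      exact norm_le_zero_iff.mp hba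
    rw [hξ, hη, sub_self, norm_zero, sub_self, norm_zero, mul_zero]
  have ha : (0:ℝ) < ‖ξ‖ := norm_pos_iff.mpr hξ
  have hb : (0:ℝ) ≤ ‖η‖ := norm_nonneg _
  set a := ‖ξ‖ with hadef
  set b := ‖η‖ with hbdef
  set D := ‖ξ - η‖ with hDdef
  have hD : (0:ℝ) ≤ D := norm_nonneg _
  have hab : a - b ≤ D := by
    have := norm_sub_norm_le ξ η
    rw [← hadef, ← hbdef, ← hDdef] at this
    exact this
  have hx0 : (0:ℝ) < κ + a := by linarith
  have hg0 : (0:ℝ) < κ + a + b := by linarith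
  have hxg : κ + a ≤ κ + a + b := by linarith
  have hg2x : κ + a + b ≤ 2 * (κ + a) := by linarith
  have hyx : κ + b ≤ κ + a := by linarith
  have hy : (0:ℝ) ≤ κ + b := by linarith
  have hG : (0:ℝ) ≤ (κ + a + b) ^ (p - 2) := Real.rpow_nonneg hg0.le _
  have hid : Sop n N p κ ξ - Sop n N p κ η
      = ((κ + a) ^ (p - 2)) • (ξ - η) + (((κ + a) ^ (p - 2)) - ((κ + b) ^ (p - 2))) • η := by
    show ((κ + a) ^ (p - 2)) • ξ - ((κ + b) ^ (p - 2)) • η = _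
    rw [smul_sub, sub_smul]
    abel
  have htri : ‖Sop n N p κ ξ - Sop n N p κ η‖
      ≤ (κ + a) ^ (p - 2) * D + |(κ + a) ^ (p - 2) - (κ + b) ^ (p - 2)| * b := by
    rw [hid]
    refine le_trans (norm_add_le _ _) ?_
    rw [norm_smul, norm_smul, Real.norm_eq_abs, Real.norm_eq_abs,
      abs_of_nonneg (Real.rpow_nonneg hx0.le _)]
  rcases le_total 2 p with hple | hple
  · -- p ≥ 2
    have hq : (0:ℝ) ≤ p - 2 := by linarith
    have hA : (κ + a) ^ (p - 2) ≤ (κ + a + b) ^ (p - 2) :=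
      Real.rpow_le_rpow hx0.le hxg hq
    have hmono : (κ + b) ^ (p - 2) ≤ (κ + a) ^ (p - 2) :=
      Real.rpow_le_rpow hy hyx hq
    have hdiff := pow_diff_mul_le_of_nonneg (q := p - 2) hq hy hyx
    have habs : |(κ + a) ^ (p - 2) - (κ + b) ^ (p - 2)|
        = (κ + a) ^ (p - 2) - (κ + b) ^ (p - 2) := abs_of_nonneg (by linarith)
    have t2 : ((κ + a) ^ (p - 2) - (κ + b) ^ (p - 2)) * b
        ≤ ((κ + a) ^ (p - 2) - (κ + b) ^ (p - 2)) * (κ + b) :=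
      mul_le_mul_of_nonneg_left (by linarith) (by linarith)
    have t4 : (p - 2) * (κ + a) ^ (p - 2) * (a - b) ≤ (p - 2) * (κ + a + b) ^ (p - 2) * D := by
      have h1 : (p - 2) * (κ + a) ^ (p - 2) ≤ (p - 2) * (κ + a + b) ^ (p - 2) :=
        mul_le_mul_of_nonneg_left hA hq
      exact mul_le_mul h1 hab (by linarith) (mul_nonneg hq hG)
    have hC2 : GYC2 p = (2:ℝ) ^ (p - 2) * (1 + (p - 2)) := by
      unfold GYC2
      rw [abs_of_nonneg (by linarith : (0:ℝ) ≤ p - 2)]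
    have h2pow : (1:ℝ) ≤ (2:ℝ) ^ (p - 2) := by
      have := Real.rpow_le_rpow_of_exponent_le (by norm_num : (1:ℝ) ≤ 2) hq
      rwa [Real.rpow_zero] at this
    have hGD : (0:ℝ) ≤ (κ + a + b) ^ (p - 2) * D := mul_nonneg hG hD
    rw [hC2]
    have t1 : (κ + a) ^ (p - 2) * D ≤ (κ + a + b) ^ (p - 2) * D :=
      mul_le_mul_of_nonneg_right hA hD
    rw [habs] at htri
    linarith [htri, t2, hdiff, t4, t1,
      mul_nonneg (mul_nonneg (sub_nonneg.2 h2pow) (by linarith : (0:ℝ) ≤ 1 + (p - 2))) hGD]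
  · -- p ≤ 2
    have hq : p - 2 ≤ 0 := by linarith
    have hgh : (0:ℝ) < (κ + a + b) / 2 := by linarith
    have hA : (κ + a) ^ (p - 2) ≤ (2:ℝ) ^ (2 - p) * (κ + a + b) ^ (p - 2) := by
      have h1 : (κ + a) ^ (p - 2) ≤ ((κ + a + b) / 2) ^ (p - 2) :=
        Real.rpow_le_rpow_of_nonpos hgh (by linarith) hq
      have e : ((κ + a + b) / 2) ^ (p - 2) = (2:ℝ) ^ (2 - p) * (κ + a + b) ^ (p - 2) := by
        rw [Real.div_rpow hg0.le (by norm_num : (0:ℝ) ≤ 2)]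
        rw [div_eq_mul_inv, ← Real.rpow_neg (by norm_num : (0:ℝ) ≤ 2),
          (by ring : -(p - 2) = 2 - p)]
        ring
      rw [← e]
      exact h1
    have hC2 : GYC2 p = (2:ℝ) ^ (2 - p) * (3 - p) := by
      unfold GYC2
      rw [abs_of_nonpos (by linarith : p - 2 ≤ 0), (by ring : -(p - 2) = 2 - p)]
      ring
    have h2pow : (0:ℝ) < (2:ℝ) ^ (2 - p) := Real.rpow_pos_of_pos (by norm_num) _
    rw [hC2]
    by_cases hyz : κ + b = 0
    · have hb0 : b = 0 := by linarith
      rw [hb0, mul_zero] at htri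
      have t1 : (κ + a) ^ (p - 2) * D ≤ (2:ℝ) ^ (2 - p) * (κ + a + b) ^ (p - 2) * D := by
        have := mul_le_mul_of_nonneg_right hA hD
        linarith
      linarith [htri, t1,
        mul_nonneg (mul_nonneg h2pow.le (by linarith : (0:ℝ) ≤ 2 - p)) (mul_nonneg hG hD)]
    have hy0 : (0:ℝ) < κ + b := lt_of_le_of_ne hy (Ne.symm hyz)
    have hmono : (κ + a) ^ (p - 2) ≤ (κ + b) ^ (p - 2) :=
      Real.rpow_le_rpow_of_nonpos hy0 hyx hq
    have habs : |(κ + a) ^ (p - 2) - (κ + b) ^ (p - 2)|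
        = (κ + b) ^ (p - 2) - (κ + a) ^ (p - 2) := by
      rw [abs_sub_comm]
      exact abs_of_nonneg (by linarith)
    have hdiff := pow_diff_mul_le_of_nonpos (q := p - 2) (by linarith) hq hy hyx hx0
    have t2 : ((κ + b) ^ (p - 2) - (κ + a) ^ (p - 2)) * b
        ≤ ((κ + b) ^ (p - 2) - (κ + a) ^ (p - 2)) * (κ + b) :=
      mul_le_mul_of_nonneg_left (by linarith) (by linarith)
    have t4 : (2 - p) * (κ + a) ^ (p - 2) * (a - b)
        ≤ (2 - p) * ((2:ℝ) ^ (2 - p) * (κ + a + b) ^ (p - 2)) * D := by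
      have h1 : (2 - p) * (κ + a) ^ (p - 2) ≤ (2 - p) * ((2:ℝ) ^ (2 - p) * (κ + a + b) ^ (p - 2)) :=
        mul_le_mul_of_nonneg_left hA (by linarith)
      exact mul_le_mul h1 hab (by linarith) (mul_nonneg (by linarith) (mul_nonneg h2pow.le hG))
    have t1 : (κ + a) ^ (p - 2) * D ≤ (2:ℝ) ^ (2 - p) * (κ + a + b) ^ (p - 2) * D := by
      have := mul_le_mul_of_nonneg_right hA hD
      linarith
    rw [habs] at htri
    linarith [htri, t2, hdiff, t4, t1]

lemma Sop_lip (n N : ℕ) {p κ : ℝ} (hp : 1 < p) (hκ : 0 ≤ κ)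
    (ξ η : EuclideanSpace ℝ (Fin n × Fin N)) :
    ‖Sop n N p κ ξ - Sop n N p κ η‖ ≤ GYC2 p * (κ + ‖ξ‖ + ‖η‖) ^ (p - 2) * ‖ξ - η‖ := by
  rcases le_total ‖η‖ ‖ξ‖ with h | h
  · exact Sop_lip_aux n N hp hκ ξ η h
  · have := Sop_lip_aux n N hp hκ η ξ h
    rw [norm_sub_rev (Sop n N p κ η), norm_sub_rev η ξ, add_right_comm κ ‖η‖ ‖ξ‖] at this
    exact this

lemma core_sub {p κ a b : ℝ} (hp1 : 0 < p) (hp2 : p ≤ 2) (hκ : 0 ≤ κ) (hb : 0 ≤ b)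
    (hba : b ≤ a) (hx : 0 < κ + a) :
    (κ + b) ^ ((p - 2) / 2) * b ≤ (κ + a) ^ ((p - 2) / 2) * ((1 - p / 2) * a + (p / 2) * b) := by
  rcases (show (0:ℝ) ≤ κ + b by linarith).eq_or_lt with h0 | hy0
  · have hb0 : b = 0 := by linarith
    rw [hb0, mul_zero]
    have h1 : (0:ℝ) ≤ (κ + a) ^ ((p - 2) / 2) := Real.rpow_nonneg hx.le _
    have h2 : (0:ℝ) ≤ (1 - p / 2) * a := mul_nonneg (by linarith) (by linarith)
    linarith [mul_nonneg h1 (by linarith : (0:ℝ) ≤ (1 - p / 2) * a + p / 2 * 0)]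
  have hkey := key_concave (s := p / 2) (by linarith) (by linarith) hx hy0.le
  rw [(by ring : p / 2 - 1 = (p - 2) / 2)] at hkey
  rw [show (p / 2 : ℝ) = (p - 2) / 2 + 1 by ring, Real.rpow_add_one hy0.ne',
    Real.rpow_add_one hx.ne'] at hkey
  have hmono : (κ + a) ^ ((p - 2) / 2) ≤ (κ + b) ^ ((p - 2) / 2) :=
    Real.rpow_le_rpow_of_nonpos hy0 (by linarith) (by linarith)
  have hκm := mul_le_mul_of_nonneg_left hmono hκ
  nlinarith [hkey, hκm]


set_option maxHeartbeats 1000000 in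
lemma Vop_low_aux (n N : ℕ) {p κ : ℝ} (hp : 1 < p) (hκ : 0 ≤ κ)
    (ξ η : EuclideanSpace ℝ (Fin n × Fin N)) (hba : ‖η‖ ≤ ‖ξ‖) :
    GYc0 p ^ 2 * (κ + ‖ξ‖ + ‖η‖) ^ (p - 2) * ‖ξ - η‖ ^ 2
      ≤ ‖Vop n N p κ ξ - Vop n N p κ η‖ ^ 2 := by
  by_cases hξ : ξ = 0
  · have hη : η = 0 := by
      rw [hξ, norm_zero] at hba
      exact norm_le_zero_iff.mp hba
    rw [hξ, hη, sub_self, norm_zero]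
    simp
  have ha : (0:ℝ) < ‖ξ‖ := norm_pos_iff.mpr hξ
  have hb : (0:ℝ) ≤ ‖η‖ := norm_nonneg _
  set a := ‖ξ‖ with hadef
  set b := ‖η‖ with hbdef
  set s := (inner ℝ ξ η : ℝ) with hsdef
  have hx0 : (0:ℝ) < κ + a := by linarith
  have hg0 : (0:ℝ) < κ + a + b := by linarith
  have hy : (0:ℝ) ≤ κ + b := by linarith
  have hα : (0:ℝ) ≤ (κ + a) ^ ((p - 2) / 2) := Real.rpow_nonneg hx0.le _
  have hβ : (0:ℝ) ≤ (κ + b) ^ ((p - 2) / 2) := Real.rpow_nonneg hy _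
  have hgr : (0:ℝ) ≤ (κ + a + b) ^ ((p - 2) / 2) := Real.rpow_nonneg hg0.le _
  have hc0 : (0:ℝ) < GYc0 p := GYc0_pos hp
  have hw : (0:ℝ) < (2:ℝ) ^ (-|p - 2| / 2) := Real.rpow_pos_of_pos (by norm_num) _
  have hw1 : (2:ℝ) ^ (-|p - 2| / 2) ≤ 1 :=
    Real.rpow_le_one_of_one_le_of_nonpos (by norm_num)
      (by { have := abs_nonneg (p - 2); linarith })
  have hmin1 : min (p / 2) 1 ≤ 1 := min_le_right _ _
  have hminp : min (p / 2) 1 ≤ p / 2 := min_le_left _ _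
  have hmin0 : (0:ℝ) < min (p / 2) 1 := lt_min (by linarith) one_pos
  have hc0w2 : GYc0 p ≤ (2:ℝ) ^ (-|p - 2| / 2) / 2 := by
    unfold GYc0
    nlinarith
  have hc0w : GYc0 p ≤ (2:ℝ) ^ (-|p - 2| / 2) := by linarith
  have hc0p : GYc0 p ≤ p / 2 := by
    unfold GYc0
    nlinarith
  have hW := base_half (p := p) hg0 (by linarith) (by linarith : κ + a ≤ κ + a + b)
  -- notations
  have hexp : ‖Vop n N p κ ξ - Vop n N p κ η‖ ^ 2
      = ((κ + a) ^ ((p - 2) / 2) * a) ^ 2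
        - 2 * ((κ + a) ^ ((p - 2) / 2) * ((κ + b) ^ ((p - 2) / 2) * s))
        + ((κ + b) ^ ((p - 2) / 2) * b) ^ 2 := by
    show ‖((κ + a) ^ ((p - 2) / 2)) • ξ - ((κ + b) ^ ((p - 2) / 2)) • η‖ ^ 2 = _
    rw [norm_sub_sq_real, norm_smul, norm_smul, real_inner_smul_left, real_inner_smul_right,
      Real.norm_eq_abs, Real.norm_eq_abs, abs_of_nonneg hα, abs_of_nonneg hβ]
  have hD2 : ‖ξ - η‖ ^ 2 = a ^ 2 - 2 * s + b ^ 2 := by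
    rw [norm_sub_sq_real, ← hsdef, ← hadef, ← hbdef]
  -- the two endpoint estimates
  have hE1 : GYc0 p * (κ + a + b) ^ ((p - 2) / 2) * (a + b)
      ≤ (κ + a) ^ ((p - 2) / 2) * a + (κ + b) ^ ((p - 2) / 2) * b := by
    have t1 : GYc0 p * ((κ + a + b) ^ ((p - 2) / 2) * (a + b))
        ≤ ((2:ℝ) ^ (-|p - 2| / 2) / 2) * ((κ + a + b) ^ ((p - 2) / 2) * (a + b)) :=
      mul_le_mul_of_nonneg_right hc0w2 (mul_nonneg hgr (by linarith))
    have t2 : (κ + a + b) ^ ((p - 2) / 2) * (a + b)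
        ≤ (κ + a + b) ^ ((p - 2) / 2) * (2 * a) :=
      mul_le_mul_of_nonneg_left (by linarith) hgr
    have t2' := mul_le_mul_of_nonneg_left t2 (by positivity : (0:ℝ) ≤ (2:ℝ) ^ (-|p - 2| / 2) / 2)
    have t3 : ((2:ℝ) ^ (-|p - 2| / 2) * (κ + a + b) ^ ((p - 2) / 2)) * a
        ≤ (κ + a) ^ ((p - 2) / 2) * a := mul_le_mul_of_nonneg_right hW ha.le
    have t4 : (0:ℝ) ≤ (κ + b) ^ ((p - 2) / 2) * b := mul_nonneg hβ hb
    linarith [t1, t2', t3, t4]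
  have hE2 : GYc0 p * (κ + a + b) ^ ((p - 2) / 2) * (a - b)
      ≤ (κ + a) ^ ((p - 2) / 2) * a - (κ + b) ^ ((p - 2) / 2) * b := by
    rcases le_total 2 p with hple | hple
    · have hmono : (κ + b) ^ ((p - 2) / 2) ≤ (κ + a) ^ ((p - 2) / 2) :=
        Real.rpow_le_rpow hy (by linarith) (by linarith)
      have u1 : GYc0 p * ((κ + a + b) ^ ((p - 2) / 2) * (a - b))
          ≤ (2:ℝ) ^ (-|p - 2| / 2) * ((κ + a + b) ^ ((p - 2) / 2) * (a - b)) :=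
        mul_le_mul_of_nonneg_right hc0w (mul_nonneg hgr (by linarith))
      have u2 : ((2:ℝ) ^ (-|p - 2| / 2) * (κ + a + b) ^ ((p - 2) / 2)) * (a - b)
          ≤ (κ + a) ^ ((p - 2) / 2) * (a - b) := mul_le_mul_of_nonneg_right hW (by linarith)
      have u3 : (κ + b) ^ ((p - 2) / 2) * b ≤ (κ + a) ^ ((p - 2) / 2) * b :=
        mul_le_mul_of_nonneg_right hmono hb
      linarith [u1, u2, u3]
    · have hcore := core_sub (p := p) (κ := κ) (by linarith) hple hκ hb hba hx0
      have hαg : (κ + a + b) ^ ((p - 2) / 2) ≤ (κ + a) ^ ((p - 2) / 2) :=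
        Real.rpow_le_rpow_of_nonpos hx0 (by linarith) (by linarith)
      have v1 : GYc0 p * ((κ + a + b) ^ ((p - 2) / 2) * (a - b))
          ≤ (p / 2) * ((κ + a + b) ^ ((p - 2) / 2) * (a - b)) :=
        mul_le_mul_of_nonneg_right hc0p (mul_nonneg hgr (by linarith))
      have v2 : (p / 2) * ((κ + a + b) ^ ((p - 2) / 2) * (a - b))
          ≤ (p / 2) * ((κ + a) ^ ((p - 2) / 2) * (a - b)) :=
        mul_le_mul_of_nonneg_left (mul_le_mul_of_nonneg_right hαg (by linarith)) (by linarith)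
      linarith [v1, v2, hcore]
  -- squares of the endpoint estimates
  have hP1 : (0:ℝ) ≤ GYc0 p * (κ + a + b) ^ ((p - 2) / 2) * (a + b) := by positivity
  have hP2 : (0:ℝ) ≤ GYc0 p * (κ + a + b) ^ ((p - 2) / 2) * (a - b) := by
    apply mul_nonneg (mul_nonneg hc0.le hgr)
    linarith
  have hQ1 := pow_le_pow_left₀ hP1 hE1 2
  have hQ2 := pow_le_pow_left₀ hP2 hE2 2
  -- Cauchy-Schwarz
  have hs1 : s ≤ a * b := real_inner_le_norm ξ η
  have hs2 : -(a * b) ≤ s := by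
    have h1 := abs_real_inner_le_norm ξ η
    have h2 := neg_abs_le s
    rw [← hsdef, ← hadef, ← hbdef] at h1
    linarith
  -- convert the constant
  have hGr : (κ + a + b) ^ (p - 2) = ((κ + a + b) ^ ((p - 2) / 2)) ^ 2 := by
    rw [← Real.rpow_natCast ((κ + a + b) ^ ((p - 2) / 2)) 2, ← Real.rpow_mul hg0.le]
    norm_num
  rw [hexp, hD2, hGr]
  rcases le_total ((κ + a) ^ ((p - 2) / 2) * (κ + b) ^ ((p - 2) / 2))
      ((GYc0 p * (κ + a + b) ^ ((p - 2) / 2)) ^ 2) with hc | hc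
  · have hprod := mul_nonneg (sub_nonneg.2 hc) (by linarith : (0:ℝ) ≤ s + a * b)
    nlinarith [hQ1, hprod]
  · have hprod := mul_nonneg (sub_nonneg.2 hc) (by linarith : (0:ℝ) ≤ a * b - s)
    nlinarith [hQ2, hprod]

lemma Vop_low (n N : ℕ) {p κ : ℝ} (hp : 1 < p) (hκ : 0 ≤ κ)
    (ξ η : EuclideanSpace ℝ (Fin n × Fin N)) :
    GYc0 p ^ 2 * (κ + ‖ξ‖ + ‖η‖) ^ (p - 2) * ‖ξ - η‖ ^ 2
      ≤ ‖Vop n N p κ ξ - Vop n N p κ η‖ ^ 2 := by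
  rcases le_total ‖η‖ ‖ξ‖ with h | h
  · exact Vop_low_aux n N hp hκ ξ η h
  · have := Vop_low_aux n N hp hκ η ξ h
    rw [norm_sub_rev (Vop n N p κ η), norm_sub_rev η ξ, add_right_comm κ ‖η‖ ‖ξ‖] at this
    exact this

lemma absorb_chain {c₂ M W X GA GB D T : ℝ} (hc₂ : 0 ≤ c₂) (hM : 0 ≤ M) (hW : 0 ≤ W)
    (hX : W ≤ X) (hGB : 0 ≤ GB) (hGA : GA ≤ W * GB) (hD : 0 ≤ D) (hT : 0 ≤ T)
    (hDMT : D ≤ M * T) :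
    c₂ * GA * D * T ≤ c₂ * M * X * (GB * T ^ 2) := by
  have f1 : (c₂ * GA) * (D * T) ≤ (c₂ * (W * GB)) * (D * T) :=
    mul_le_mul_of_nonneg_right (mul_le_mul_of_nonneg_left hGA hc₂) (mul_nonneg hD hT)
  have f2 : (c₂ * (W * GB)) * (D * T) ≤ (c₂ * (W * GB)) * ((M * T) * T) :=
    mul_le_mul_of_nonneg_left (mul_le_mul_of_nonneg_right hDMT hT)
      (mul_nonneg hc₂ (mul_nonneg hW hGB))
  have f3 : (c₂ * M * (GB * T ^ 2)) * W ≤ (c₂ * M * (GB * T ^ 2)) * X :=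
    mul_le_mul_of_nonneg_left hX
      (mul_nonneg (mul_nonneg hc₂ hM) (mul_nonneg hGB (sq_nonneg T)))
  nlinarith [f1, f2, f3]

set_option maxHeartbeats 1000000 in
lemma absorb {p δ' c₂ : ℝ} (hp : 1 < p) (hδ : 0 < δ') (hc₂ : 1 ≤ c₂) :
    ∃ K : ℝ, 1 ≤ K ∧ ∀ κ a₁ a₂ a₃ D T : ℝ, 0 ≤ κ → 0 ≤ a₁ → 0 ≤ a₂ → 0 ≤ a₃ → 0 ≤ D → 0 ≤ T →
      D ≤ κ + a₁ + a₂ → T ≤ κ + a₂ + a₃ → a₁ ≤ a₂ + D → a₃ ≤ a₂ + T →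
      c₂ * (κ + a₁ + a₂) ^ (p - 2) * D * T
        ≤ δ' * ((κ + a₁ + a₂) ^ (p - 2) * D ^ 2) + K * ((κ + a₂ + a₃) ^ (p - 2) * T ^ 2) := by
  set M := max 1 (c₂ / δ') with hMdef
  have hM1 : (1:ℝ) ≤ M := le_max_left _ _
  have hM0 : (0:ℝ) ≤ M := by linarith
  set X := max ((2 + M) ^ (p - 2)) ((3:ℝ) ^ (2 - p)) with hXdef
  have h2M : (0:ℝ) ≤ 2 + M := by linarith
  have hX1 : (1:ℝ) ≤ X := by
    rcases le_total p 2 with h | h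
    · refine le_trans ?_ (le_max_right _ _)
      have := Real.rpow_le_rpow_of_exponent_le (by norm_num : (1:ℝ) ≤ 3) (by linarith : (0:ℝ) ≤ 2 - p)
      rwa [Real.rpow_zero] at this
    · refine le_trans ?_ (le_max_left _ _)
      have := Real.rpow_le_rpow_of_exponent_le (by linarith : (1:ℝ) ≤ 2 + M)
        (by linarith : (0:ℝ) ≤ p - 2)
      rwa [Real.rpow_zero] at this
  have hX0 : (0:ℝ) ≤ X := by linarith
  have hc₂0 : (0:ℝ) ≤ c₂ := by linarith
  have hcM : (1:ℝ) ≤ c₂ * M := by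
    have := mul_le_mul hc₂ hM1 zero_le_one (by linarith : (0:ℝ) ≤ c₂)
    linarith
  refine ⟨c₂ * M * X, ?_, ?_⟩
  · have := mul_le_mul hcM hX1 zero_le_one (by linarith : (0:ℝ) ≤ c₂ * M)
    linarith
  intro κ a₁ a₂ a₃ D T hκ ha₁ ha₂ ha₃ hD hT hDA hTB hA1 hA3
  have hA0 : (0:ℝ) ≤ κ + a₁ + a₂ := by linarith
  have hB0 : (0:ℝ) ≤ κ + a₂ + a₃ := by linarith
  have hGA : (0:ℝ) ≤ (κ + a₁ + a₂) ^ (p - 2) := Real.rpow_nonneg hA0 _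
  have hGB : (0:ℝ) ≤ (κ + a₂ + a₃) ^ (p - 2) := Real.rpow_nonneg hB0 _
  have hKterm : (0:ℝ) ≤ c₂ * M * X * ((κ + a₂ + a₃) ^ (p - 2) * T ^ 2) := by
    apply mul_nonneg (mul_nonneg (mul_nonneg hc₂0 hM0) hX0)
    exact mul_nonneg hGB (sq_nonneg T)
  have hDterm : (0:ℝ) ≤ δ' * ((κ + a₁ + a₂) ^ (p - 2) * D ^ 2) :=
    mul_nonneg hδ.le (mul_nonneg hGA (sq_nonneg D))
  rcases hT.eq_or_lt with hT0 | hT0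
  · rw [← hT0, mul_zero]
    linarith
  rcases hD.eq_or_lt with hD0 | hD0
  · rw [← hD0, mul_zero, zero_mul]
    linarith
  have hApos : (0:ℝ) < κ + a₁ + a₂ := lt_of_lt_of_le hD0 hDA
  have hBpos : (0:ℝ) < κ + a₂ + a₃ := lt_of_lt_of_le hT0 hTB
  rcases le_total (c₂ * T) (δ' * D) with hcase | hcase
  · -- absorb into the δ' term
    have h2 : ((κ + a₁ + a₂) ^ (p - 2) * D) * (c₂ * T)
        ≤ ((κ + a₁ + a₂) ^ (p - 2) * D) * (δ' * D) :=
      mul_le_mul_of_nonneg_left hcase (mul_nonneg hGA hD)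
    linarith
  · -- here D ≤ M * T
    have hDMT : D ≤ M * T := by
      have h1 : D ≤ c₂ / δ' * T := by
        rw [div_mul_eq_mul_div, le_div_iff₀ hδ]
        nlinarith
      have h2 : c₂ / δ' * T ≤ M * T :=
        mul_le_mul_of_nonneg_right (le_max_right _ _) hT
      linarith
    rcases le_total 2 p with hple | hple
    · -- p ≥ 2 : compare the bases upwards
      have hAB : κ + a₁ + a₂ ≤ (2 + M) * (κ + a₂ + a₃) := by
        have hMTB : M * T ≤ M * (κ + a₂ + a₃) := mul_le_mul_of_nonneg_left hTB hM0
        nlinarith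
      have hApow : (κ + a₁ + a₂) ^ (p - 2) ≤ (2 + M) ^ (p - 2) * (κ + a₂ + a₃) ^ (p - 2) := by
        have h1 := Real.rpow_le_rpow hA0 hAB (by linarith : (0:ℝ) ≤ p - 2)
        rwa [Real.mul_rpow h2M hB0] at h1
      have := absorb_chain (X := X) hc₂0 hM0 (Real.rpow_nonneg h2M _)
        (le_max_left ((2 + M) ^ (p - 2)) ((3:ℝ) ^ (2 - p))) hGB hApow hD hT hDMT
      linarith
    · -- p ≤ 2
      have hq : p - 2 ≤ 0 := by linarith
      have h32 : (0:ℝ) ≤ (3:ℝ) ^ (2 - p) := Real.rpow_nonneg (by norm_num) _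
      have e3 : (3:ℝ) ^ (2 - p) * (3:ℝ) ^ (p - 2) = 1 := by
        rw [← Real.rpow_add (by norm_num : (0:ℝ) < 3)]
        norm_num
      rcases le_total T (κ + a₂) with h2a | h2a
      · -- B ≤ 3 A
        have hBA : κ + a₂ + a₃ ≤ 3 * (κ + a₁ + a₂) := by linarith
        have h3 : (3 * (κ + a₁ + a₂)) ^ (p - 2) ≤ (κ + a₂ + a₃) ^ (p - 2) :=
          Real.rpow_le_rpow_of_nonpos hBpos hBA hq
        rw [Real.mul_rpow (by norm_num : (0:ℝ) ≤ 3) hA0] at h3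
        have hApow : (κ + a₁ + a₂) ^ (p - 2) ≤ (3:ℝ) ^ (2 - p) * (κ + a₂ + a₃) ^ (p - 2) := by
          have h4 := mul_le_mul_of_nonneg_left h3 h32
          rw [← mul_assoc, e3, one_mul] at h4
          exact h4
        have := absorb_chain (X := X) hc₂0 hM0 h32
          (le_max_right ((2 + M) ^ (p - 2)) ((3:ℝ) ^ (2 - p))) hGB hApow hD hT hDMT
        linarith
      · -- B ≤ 3 T and A ≥ D
        have hB3T : κ + a₂ + a₃ ≤ 3 * T := by linarith
        have h3 : (3 * T) ^ (p - 2) ≤ (κ + a₂ + a₃) ^ (p - 2) :=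
          Real.rpow_le_rpow_of_nonpos hBpos hB3T hq
        rw [Real.mul_rpow (by norm_num : (0:ℝ) ≤ 3) hT] at h3
        have hT32 : T ^ (p - 2) ≤ (3:ℝ) ^ (2 - p) * (κ + a₂ + a₃) ^ (p - 2) := by
          have h4 := mul_le_mul_of_nonneg_left h3 h32
          rw [← mul_assoc, e3, one_mul] at h4
          exact h4
        have hAD : (κ + a₁ + a₂) ^ (p - 2) ≤ D ^ (p - 2) :=
          Real.rpow_le_rpow_of_nonpos hD0 hDA hq
        have hDD : D ^ (p - 2) * D = D ^ (p - 1) := by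
          rw [← Real.rpow_add_one hD0.ne' (p - 2)]
          congr 1
          ring
        have hDle : D ^ (p - 1) ≤ (M * T) ^ (p - 1) :=
          Real.rpow_le_rpow hD hDMT (by linarith)
        have hMT : (M * T) ^ (p - 1) = M ^ (p - 1) * T ^ (p - 1) := Real.mul_rpow hM0 hT
        have hMle : M ^ (p - 1) ≤ M := by
          have := Real.rpow_le_rpow_of_exponent_le hM1 (by linarith : p - 1 ≤ 1)
          rwa [Real.rpow_one] at this
        have hTT : T ^ (p - 1) = T ^ (p - 2) * T := by
          rw [← Real.rpow_add_one hT0.ne' (p - 2)]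
          congr 1
          ring
        have hTp0 : (0:ℝ) ≤ T ^ (p - 2) := Real.rpow_nonneg hT _
        have hMp0 : (0:ℝ) ≤ M ^ (p - 1) := Real.rpow_nonneg hM0 _
        calc c₂ * (κ + a₁ + a₂) ^ (p - 2) * D * T
            ≤ c₂ * D ^ (p - 2) * D * T := by
              have := mul_le_mul_of_nonneg_right (mul_le_mul_of_nonneg_left hAD hc₂0)
                (mul_nonneg hD hT)
              linarith [this]
          _ = c₂ * (D ^ (p - 2) * D) * T := by ring
          _ = c₂ * D ^ (p - 1) * T := by rw [hDD]
          _ ≤ c₂ * (M * T) ^ (p - 1) * T :=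
              mul_le_mul_of_nonneg_right (mul_le_mul_of_nonneg_left hDle hc₂0) hT
          _ = c₂ * M ^ (p - 1) * (T ^ (p - 2) * T * T) := by rw [hMT, hTT]; ring
          _ ≤ c₂ * M * (T ^ (p - 2) * T * T) := by
              have hTTT : (0:ℝ) ≤ T ^ (p - 2) * T * T :=
                mul_nonneg (mul_nonneg hTp0 hT) hT
              exact mul_le_mul_of_nonneg_right (mul_le_mul_of_nonneg_left hMle hc₂0) hTTT
          _ = c₂ * M * T ^ (p - 2) * (T * T) := by ring
          _ ≤ c₂ * M * ((3:ℝ) ^ (2 - p) * (κ + a₂ + a₃) ^ (p - 2)) * (T * T) := by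
              refine mul_le_mul_of_nonneg_right ?_ (mul_nonneg hT hT)
              exact mul_le_mul_of_nonneg_left hT32 (mul_nonneg hc₂0 hM0)
          _ = (3:ℝ) ^ (2 - p) * (c₂ * M * ((κ + a₂ + a₃) ^ (p - 2) * T ^ 2)) := by ring
          _ ≤ X * (c₂ * M * ((κ + a₂ + a₃) ^ (p - 2) * T ^ 2)) := by
              refine mul_le_mul_of_nonneg_right (le_max_right _ _) ?_
              exact mul_nonneg (mul_nonneg hc₂0 hM0) (mul_nonneg hGB (sq_nonneg T))
          _ ≤ δ' * ((κ + a₁ + a₂) ^ (p - 2) * D ^ 2)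
              + c₂ * M * X * ((κ + a₂ + a₃) ^ (p - 2) * T ^ 2) := by linarith [hDterm]

set_option maxHeartbeats 1000000 in
/-- **Generalized Young inequality.**  For each `p ∈ (1,∞)` and `δ > 0` there is a
constant `c_δ ≥ 1` depending only on `p`, `δ` (and `n, N`) such that for all `κ ≥ 0`
and all matrices `ξ₁, ξ₂, ξ₃`,
`(S(ξ₁) - S(ξ₂)) : (ξ₂ - ξ₃) ≤ δ |V(ξ₁) - V(ξ₂)|² + c_δ |V(ξ₂) - V(ξ₃)|²`. -/
theorem generalized_young (n N : ℕ) (hn : 1 ≤ n) (hN : 1 ≤ N) (p : ℝ) (hp : 1 < p)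
    (δ : ℝ) (hδ : 0 < δ) :
    ∃ cδ : ℝ, 1 ≤ cδ ∧
      ∀ κ : ℝ, 0 ≤ κ →
        ∀ ξ₁ ξ₂ ξ₃ : EuclideanSpace ℝ (Fin n × Fin N),
          ⟪Sop n N p κ ξ₁ - Sop n N p κ ξ₂, ξ₂ - ξ₃⟫
            ≤ δ * ‖Vop n N p κ ξ₁ - Vop n N p κ ξ₂‖ ^ 2
              + cδ * ‖Vop n N p κ ξ₂ - Vop n N p κ ξ₃‖ ^ 2 := by
  have hc0 : (0:ℝ) < GYc0 p := GYc0_pos hp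
  have hc1 : (0:ℝ) < GYc0 p ^ 2 := by positivity
  obtain ⟨K, hK1, hK⟩ := absorb (p := p) (δ' := δ * GYc0 p ^ 2) (c₂ := GYC2 p) hp
    (by positivity) (GYC2_ge_one p)
  refine ⟨max 1 (K / GYc0 p ^ 2), le_max_left _ _, ?_⟩
  intro κ hκ ξ₁ ξ₂ ξ₃
  have hS := Sop_lip n N hp hκ ξ₁ ξ₂
  have hcs := real_inner_le_norm (Sop n N p κ ξ₁ - Sop n N p κ ξ₂) (ξ₂ - ξ₃)
  have hT0 : (0:ℝ) ≤ ‖ξ₂ - ξ₃‖ := norm_nonneg _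
  have h1 : ⟪Sop n N p κ ξ₁ - Sop n N p κ ξ₂, ξ₂ - ξ₃⟫
      ≤ GYC2 p * (κ + ‖ξ₁‖ + ‖ξ₂‖) ^ (p - 2) * ‖ξ₁ - ξ₂‖ * ‖ξ₂ - ξ₃‖ := by
    calc ⟪Sop n N p κ ξ₁ - Sop n N p κ ξ₂, ξ₂ - ξ₃⟫
        ≤ ‖Sop n N p κ ξ₁ - Sop n N p κ ξ₂‖ * ‖ξ₂ - ξ₃‖ := hcs
      _ ≤ GYC2 p * (κ + ‖ξ₁‖ + ‖ξ₂‖) ^ (p - 2) * ‖ξ₁ - ξ₂‖ * ‖ξ₂ - ξ₃‖ :=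
          mul_le_mul_of_nonneg_right hS hT0
  have h31 : ‖ξ₃‖ - ‖ξ₂‖ ≤ ‖ξ₂ - ξ₃‖ := by
    have := norm_sub_norm_le ξ₃ ξ₂
    rwa [norm_sub_rev] at this
  have h2 := hK κ ‖ξ₁‖ ‖ξ₂‖ ‖ξ₃‖ ‖ξ₁ - ξ₂‖ ‖ξ₂ - ξ₃‖ hκ (norm_nonneg _) (norm_nonneg _)
    (norm_nonneg _) (norm_nonneg _) (norm_nonneg _)
    (by linarith [norm_sub_le ξ₁ ξ₂]) (by linarith [norm_sub_le ξ₂ ξ₃])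
    (by linarith [norm_sub_norm_le ξ₁ ξ₂]) (by linarith)
  have hV12 := Vop_low n N hp hκ ξ₁ ξ₂
  have hV23 := Vop_low n N hp hκ ξ₂ ξ₃
  have e1 := mul_le_mul_of_nonneg_left hV12 hδ.le
  have hKc : (0:ℝ) ≤ K / GYc0 p ^ 2 := div_nonneg (by linarith) hc1.le
  have e2 := mul_le_mul_of_nonneg_left hV23 hKc
  have e3 : K / GYc0 p ^ 2 * (GYc0 p ^ 2 * (κ + ‖ξ₂‖ + ‖ξ₃‖) ^ (p - 2) * ‖ξ₂ - ξ₃‖ ^ 2)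
      = K * ((κ + ‖ξ₂‖ + ‖ξ₃‖) ^ (p - 2) * ‖ξ₂ - ξ₃‖ ^ 2) := by
    field_simp
  have e4 : K / GYc0 p ^ 2 * ‖Vop n N p κ ξ₂ - Vop n N p κ ξ₃‖ ^ 2
      ≤ max 1 (K / GYc0 p ^ 2) * ‖Vop n N p κ ξ₂ - Vop n N p κ ξ₃‖ ^ 2 :=
    mul_le_mul_of_nonneg_right (le_max_right _ _) (sq_nonneg _)
  rw [e3] at e2
  linarith [h1, h2, e1, e2, e4]
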